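/- Let A be a finite-dimensional algebra with rad^l(A) = 0 and let P• be a homotopically minimal complex of finitely generated projective A-modules. Then the ideal Htp(P•) ⊆ End_{C(A-proj)}(P•) of chain endomorphisms homotopic to zero satisfies Htp(P•)^l = 0. -/

import Mathlib

open CategoryTheory CategoryTheory.Limits

/-- The radical of a module: `rad(A) • M`. -/
def radSubmodule (A : Type) [Ring A] (M : Type) [AddCommGroup M] [Module A M] :
    Submodule A M :=
  ((⊥ : Ideal A).jacobson) • (⊤ : Submodule A M)

section aux


/-- Linear maps send the radical into the radical. -/
lemma rad_map {A : Type} [Ring A] {M N : Type} [AddCommGroup M] [Module A M] [AddCommGroup N] [Module A N]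
    (f : M →ₗ[A] N) {x : M} (hx : x ∈ radSubmodule A M) : f x ∈ radSubmodule A N := by
  refine Submodule.smul_induction_on hx (fun r hr m _ => ?_) (fun a b ha hb => ?_)
  · rw [map_smul]
    exact Submodule.smul_mem_smul hr Submodule.mem_top
  · rw [map_add]; exact Submodule.add_mem _ ha hb

/-- iterated radical -/
def radIter (A : Type) [Ring A] (M : Type) [AddCommGroup M] [Module A M] : ℕ → Submodule A M
  | 0 => ⊤
  | (m + 1) => ((⊥ : Ideal A).jacobson) • radIter A M m

lemma radIter_zero {A : Type} [Ring A] {l : ℕ}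
    (hl : ∀ a : Fin l → A, (∀ i, a i ∈ (⊥ : Ideal A).jacobson) → (List.ofFn a).prod = 0)
    (M : Type) [AddCommGroup M] [Module A M] :
    ∀ (m : ℕ) (x : M), x ∈ radIter A M m → ∀ L : List A,
      (∀ a ∈ L, a ∈ (⊥ : Ideal A).jacobson) → L.length + m = l → L.prod • x = 0 := by
  intro m
  induction m with
  | zero =>
    intro x _ L hL hlen
    simp only [Nat.add_zero] at hlen
    subst hlen
    have : L.prod = 0 := by
      have h0 := hl L.get (fun i => hL _ (List.get_mem L _))
      rwa [List.ofFn_get] at h0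
    rw [this, zero_smul]
  | succ m ih =>
    intro x hx L hL hlen
    refine Submodule.smul_induction_on hx (fun r hr y hy => ?_) (fun a b ha hb => ?_)
    · rw [smul_smul]
      have : L.prod * r = (L ++ [r]).prod := by simp
      rw [this]
      refine ih y hy (L ++ [r]) ?_ (by simp; omega)
      intro a haa
      rcases List.mem_append.mp haa with h | h
      · exact hL a h
      · simp at h; subst h; exact hr
    · rw [smul_add, ha, hb, add_zero]

end aux

/-- Let `A` be a finite-dimensional algebra with `rad(A)^l = 0` (expressed elementwise)
and let `P•` be a homotopically minimal complex of finitely generated projective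
`A`-modules (i.e. all differentials factor through the radicals). Then the ideal
`Htp(P•)` of null-homotopic chain endomorphisms of `P•` satisfies `Htp(P•)^l = 0`:
every product of `l` null-homotopic endomorphisms vanishes. -/
theorem stmt_16 (k : Type) [Field k] (A : Type) [Ring A] [Algebra k A]
    [FiniteDimensional k A] (l : ℕ)
    (hl : ∀ a : Fin l → A, (∀ i, a i ∈ (⊥ : Ideal A).jacobson) → (List.ofFn a).prod = 0)
    (P : CochainComplex (ModuleCat.{0} A) ℤ)
    (hproj : ∀ n : ℤ, Module.Projective A (P.X n))
    (hfin : ∀ n : ℤ, Module.Finite A (P.X n))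
    (hmin : ∀ n : ℤ, ∀ x : P.X n, P.d n (n + 1) x ∈ radSubmodule A (P.X (n + 1))) :
    ∀ φ : Fin l → CategoryTheory.End P,
      (∀ i, Nonempty (Homotopy (φ i : P ⟶ P) 0)) → (List.ofFn φ).prod = 0 := by
  -- differentials land in the radical, for arbitrary indices
  have hmin' : ∀ i j : ℤ, ∀ x : P.X i, P.d i j x ∈ radSubmodule A (P.X j) := by
    intro i j x
    by_cases h : i + 1 = j
    · subst h; exact hmin i x
    · rw [P.shape i j h]
      exact Submodule.zero_mem _
  -- a null-homotopic endomorphism lands componentwise in the radical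
  have key : ∀ f : CategoryTheory.End P, Nonempty (Homotopy (f : P ⟶ P) 0) →
      ∀ (n : ℤ) (x : P.X n), (f : P ⟶ P).f n x ∈ radSubmodule A (P.X n) := by
    intro f ⟨h⟩ n x
    have hc := h.comm n
    rw [dNext_eq h.hom (show (ComplexShape.up ℤ).Rel n (n + 1) by simp),
        prevD_eq h.hom (show (ComplexShape.up ℤ).Rel (n - 1) n by simp)] at hc
    have hx : (f : P ⟶ P).f n x
        = h.hom (n + 1) n (P.d n (n + 1) x) + P.d (n - 1) n (h.hom n (n - 1) x) := by
      rw [hc]; simp [LinearMap.add_apply, LinearMap.comp_apply]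
    rw [hx]
    exact Submodule.add_mem _ (rad_map _ (hmin n x)) (hmin' (n - 1) n _)
  -- products of such maps land componentwise in the iterated radical
  have prodmem : ∀ L : List (CategoryTheory.End P),
      (∀ f ∈ L, ∀ (n : ℤ) (x : P.X n), (f : P ⟶ P).f n x ∈ radSubmodule A (P.X n)) →
      ∀ (n : ℤ) (x : P.X n), (L.prod : P ⟶ P).f n x ∈ radIter A (P.X n) L.length := by
    intro L
    induction L with
    | nil =>
      intro _ n x
      exact Submodule.mem_top
    | cons f L ih =>
      intro hmem n x
      have h1 : ((f :: L).prod : P ⟶ P).f n x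
          = (f : P ⟶ P).f n ((L.prod : P ⟶ P).f n x) := by
        rw [List.prod_cons, CategoryTheory.End.mul_def]
        rfl
      rw [h1]
      -- f maps radIter m into radIter (m+1)
      have hstep : ∀ (m : ℕ) (y : P.X n), y ∈ radIter A (P.X n) m →
          (f : P ⟶ P).f n y ∈ radIter A (P.X n) (m + 1) := by
        intro m
        induction m with
        | zero =>
          intro y _
          exact hmem f List.mem_cons_self n y
        | succ m ihm =>
          intro y hy
          refine Submodule.smul_induction_on hy (fun r hr z hz => ?_) (fun a b ha hb => ?_)
          · rw [map_smul]
            exact Submodule.smul_mem_smul hr (ihm z hz)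
          · rw [map_add]
            exact Submodule.add_mem _ ha hb
      exact hstep L.length _ (ih (fun g hg => hmem g (List.mem_cons_of_mem f hg)) n x)
  intro φ hφ
  have hall : ∀ f ∈ List.ofFn φ, ∀ (n : ℤ) (x : P.X n),
      (f : P ⟶ P).f n x ∈ radSubmodule A (P.X n) := by
    intro f hf
    rw [List.mem_ofFn] at hf
    obtain ⟨i, rfl⟩ := hf
    exact key (φ i) (hφ i)
  apply HomologicalComplex.hom_ext
  intro n
  apply ModuleCat.hom_ext; apply LinearMap.ext
  intro x
  have h1 := prodmem (List.ofFn φ) hall n x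
  rw [List.length_ofFn] at h1
  have h2 := radIter_zero hl (P.X n) l _ h1 [] (by simp) (by simp)
  simpa using h2
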